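/- arXiv:1810.05693 — 2 statements merged into one kernel-verified Lean document; each statement's English description precedes it below -/
import Mathlib

section
/- Let α < β < 0 and define C_{α,β} = sup over γ ∈ (−∞, −1/α) of C_{α,β,γ}. Then C_{α,β} = 2^{1/α − 1/β} if α ≤ 2β, and C_{α,β} = 2^{−1/α} if 2β < α < β. -/
open Set Real

/-- The function `C_{α,β,γ}(ε)` from the paper:
`C_{α,β,γ}(ε) = (ε^{γβ+1}+1)^{1/β} (1+ε)^{1/α} / ((ε^{γα+1}+1)^{1/α} (1+ε)^{1/β})`. -/
noncomputable def Cfun (α β γ ε : ℝ) : ℝ :=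
  ((ε ^ (γ * β + 1) + 1) ^ (1 / β) * (1 + ε) ^ (1 / α)) /
    ((ε ^ (γ * α + 1) + 1) ^ (1 / α) * (1 + ε) ^ (1 / β))

/-- `C_{α,β,γ}`: the maximum of `C_{α,β,γ}(ε)` over `ε ∈ [0,1]`. -/
noncomputable def Cmax (α β γ : ℝ) : ℝ :=
  sSup (Cfun α β γ '' Icc (0 : ℝ) 1)


-- pointwise bound
lemma ptwise (α β γ ε : ℝ) (hαβ : α < β) (hβ : β < 0) (hγ : γ < -(1/α))
    (hε0 : 0 < ε) (hε1 : ε ≤ 1) :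
    Cfun α β γ ε ≤ max ((2:ℝ) ^ (1/α - 1/β)) ((2:ℝ) ^ (-(1/α))) := by
  have hα : α < 0 := hαβ.trans hβ
  have hα' : α ≠ 0 := ne_of_lt hα
  have hβ' : β ≠ 0 := ne_of_lt hβ
  set a : ℝ := γ * α + 1 with ha_def
  set b : ℝ := γ * β + 1 with hb_def
  have ha_pos : 0 < a := by
    have h1 : γ * α > (-(1/α)) * α := by
      exact mul_lt_mul_of_neg_right hγ hα
    have h2 : (-(1/α)) * α = -1 := by field_simp
    rw [h2] at h1; linarith
  have hγβ : γ < -(1/β) := by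
    have : -(1/α) < -(1/β) := by
      have : 1/β < 1/α := one_div_lt_one_div_of_neg_of_lt hβ hαβ
      linarith
    linarith
  have hb_pos : 0 < b := by
    have h1 : γ * β > (-(1/β)) * β := mul_lt_mul_of_neg_right hγβ hβ
    have h2 : (-(1/β)) * β = -1 := by field_simp
    rw [h2] at h1; linarith
  have ht0 : 0 < β / α := div_pos_of_neg_of_neg hβ hα
  have ht1 : β / α < 1 := by
    rw [div_lt_one_of_neg hα]; exact hαβ
  set t : ℝ := β / α with ht_def
  have hεa_pos : (0:ℝ) < ε ^ a := rpow_pos_of_pos hε0 a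
  have hεb_pos : (0:ℝ) < ε ^ b := rpow_pos_of_pos hε0 b
  have hεa_le : ε ^ a ≤ 1 := rpow_le_one hε0.le hε1 ha_pos.le
  have hXa1 : (1:ℝ) ≤ ε ^ a + 1 := by linarith
  have hXa_pos : (0:ℝ) < ε ^ a + 1 := by linarith
  have hXb_pos : (0:ℝ) < ε ^ b + 1 := by linarith
  have h1ε_pos : (0:ℝ) < 1 + ε := by linarith
  have h1ε2 : 1 + ε ≤ 2 := by linarith
  have hden_pos : (0:ℝ) < (ε ^ a + 1) ^ (1/α) * (1 + ε) ^ (1/β) :=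
    mul_pos (rpow_pos_of_pos hXa_pos _) (rpow_pos_of_pos h1ε_pos _)
  have hsr : 1/β < 1/α := one_div_lt_one_div_of_neg_of_lt hβ hαβ
  have hs_neg : 1/α < 0 := by
    exact one_div_neg.mpr hα
  have hr_neg : 1/β < 0 := one_div_neg.mpr hβ
  rcases le_or_gt 1 a with hage | halt
  · -- a ≥ 1 case : Cfun ≤ 2^(1/α - 1/β)
    refine le_max_of_le_left ?_
    have hba : b ≤ a := by
      have : γ ≤ 0 := by nlinarith
      nlinarith
    have hXb_ge : (ε ^ a + 1) ^ t ≤ ε ^ b + 1 := by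
      have h1 : ε ^ a ≤ ε ^ b := rpow_le_rpow_of_exponent_ge hε0 hε1 hba
      have h2 : (ε ^ a + 1) ^ t ≤ (ε ^ a + 1) ^ (1:ℝ) :=
        rpow_le_rpow_of_exponent_le hXa1 ht1.le
      rw [rpow_one] at h2; linarith
    have hnum : (ε ^ b + 1) ^ (1/β) ≤ (ε ^ a + 1) ^ (1/α) := by
      have h3 : (ε ^ b + 1) ^ (1/β) ≤ ((ε ^ a + 1) ^ t) ^ (1/β) :=
        rpow_le_rpow_of_nonpos (rpow_pos_of_pos hXa_pos t) hXb_ge hr_neg.le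
      have h4 : ((ε ^ a + 1) ^ t) ^ (1/β) = (ε ^ a + 1) ^ (1/α) := by
        rw [← rpow_mul hXa_pos.le]
        congr 1
        rw [ht_def]; field_simp
      rwa [h4] at h3
    have : Cfun α β γ ε ≤ ((ε ^ a + 1) ^ (1/α) * (1 + ε) ^ (1/α)) /
        ((ε ^ a + 1) ^ (1/α) * (1 + ε) ^ (1/β)) := by
      unfold Cfun
      rw [← ha_def, ← hb_def]
      rw [div_le_div_iff_of_pos_right hden_pos]
      exact mul_le_mul_of_nonneg_right hnum (rpow_pos_of_pos h1ε_pos _).le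
    refine this.trans ?_
    have hXa_ne : (ε ^ a + 1) ^ (1/α) ≠ 0 := (rpow_pos_of_pos hXa_pos _).ne'
    rw [mul_div_mul_left _ _ hXa_ne, ← rpow_sub h1ε_pos]
    exact rpow_le_rpow h1ε_pos.le h1ε2 (by linarith)
  · -- a < 1 case : Cfun ≤ 2^(-(1/α))
    refine le_max_of_le_right ?_
    -- b ≤ 1
    have hb1 : b ≤ 1 := by
      have hγpos : 0 < γ := by nlinarith
      nlinarith
    have hεb_ge : ε ≤ ε ^ b := by
      have := rpow_le_rpow_of_exponent_ge hε0 hε1 hb1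
      rwa [rpow_one] at this
    -- key AM-GM inequality
    have hK : ((ε ^ a + 1)/2) ^ t * (1 + ε) ^ (1 - t) ≤ ε ^ b + 1 := by
      have h5 : ((ε ^ a + 1)/2) ^ t * (1 + ε) ^ (1 - t) ≤
          t * ((ε ^ a + 1)/2) + (1 - t) * (1 + ε) :=
        Real.geom_mean_le_arith_mean2_weighted ht0.le (by linarith) (by linarith) h1ε_pos.le
          (by ring)
      nlinarith
    have hKpos : (0:ℝ) < ((ε ^ a + 1)/2) ^ t * (1 + ε) ^ (1 - t) :=
      mul_pos (rpow_pos_of_pos (by linarith) _) (rpow_pos_of_pos h1ε_pos _)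
    have hnum : (ε ^ b + 1) ^ (1/β) ≤
        ((ε ^ a + 1) ^ (1/α) / 2 ^ (1/α)) * (1 + ε) ^ (1/β - 1/α) := by
      have h6 : (ε ^ b + 1) ^ (1/β) ≤
          (((ε ^ a + 1)/2) ^ t * (1 + ε) ^ (1 - t)) ^ (1/β) :=
        rpow_le_rpow_of_nonpos hKpos hK hr_neg.le
      have h7 : (((ε ^ a + 1)/2) ^ t * (1 + ε) ^ (1 - t)) ^ (1/β)
          = ((ε ^ a + 1) ^ (1/α) / 2 ^ (1/α)) * (1 + ε) ^ (1/β - 1/α) := by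
        rw [Real.mul_rpow (rpow_pos_of_pos (by linarith : (0:ℝ) < (ε ^ a + 1)/2) t).le
          (rpow_pos_of_pos h1ε_pos _).le, ← rpow_mul (by linarith : (0:ℝ) ≤ (ε ^ a + 1)/2),
          ← rpow_mul h1ε_pos.le]
        have e1 : t * (1/β) = 1/α := by rw [ht_def]; field_simp
        have e2 : (1 - t) * (1/β) = 1/β - 1/α := by rw [sub_mul, one_mul, e1]
        rw [e1, e2, Real.div_rpow hXa_pos.le (by norm_num : (0:ℝ) ≤ 2)]
      rwa [h7] at h6
    -- combine
    have hstep : Cfun α β γ ε ≤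
        (((ε ^ a + 1) ^ (1/α) / 2 ^ (1/α)) * (1 + ε) ^ (1/β - 1/α) * (1 + ε) ^ (1/α)) /
          ((ε ^ a + 1) ^ (1/α) * (1 + ε) ^ (1/β)) := by
      unfold Cfun
      rw [← ha_def, ← hb_def, div_le_div_iff_of_pos_right hden_pos]
      exact mul_le_mul_of_nonneg_right hnum (rpow_pos_of_pos h1ε_pos _).le
    refine hstep.trans (le_of_eq ?_)
    have e1 : (1 + ε) ^ (1/β - 1/α) * (1 + ε) ^ (1/α) = (1 + ε) ^ (1/β) := by
      rw [← rpow_add h1ε_pos]; ring_nf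
    have hXa_ne : (ε ^ a + 1) ^ (1/α) ≠ 0 := (rpow_pos_of_pos hXa_pos _).ne'
    have h1ε_ne : (1 + ε) ^ (1/β) ≠ 0 := (rpow_pos_of_pos h1ε_pos _).ne'
    have h2s_ne : (2:ℝ) ^ (1/α) ≠ 0 := (rpow_pos_of_pos two_pos _).ne'
    rw [mul_assoc, e1, Real.rpow_neg (by norm_num : (0:ℝ) ≤ 2)]
    rw [div_mul_eq_mul_div, div_div, mul_comm ((2:ℝ) ^ (1/α)), div_mul_eq_div_div,
      div_self (by positivity : (ε ^ a + 1) ^ (1/α) * (1 + ε) ^ (1/β) ≠ 0), one_div]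

lemma tendsto_gamma_atBot (α β ε : ℝ) (hαβ : α < β) (hβ : β < 0)
    (hε0 : 0 < ε) (hε1 : ε < 1) :
    Filter.Tendsto (fun γ => Cfun α β γ ε) Filter.atBot
      (nhds ((1 + ε) ^ (1/α - 1/β))) := by
  have hα : α < 0 := hαβ.trans hβ
  have hlog : Real.log ε < 0 := Real.log_neg hε0 hε1
  have h1ε_pos : (0:ℝ) < 1 + ε := by linarith
  have key : ∀ c : ℝ, c < 0 → Filter.Tendsto (fun γ => ε ^ (γ * c + 1)) Filter.atBot (nhds 0) := by
    intro c hc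
    have hrw : (fun γ : ℝ => ε ^ (γ * c + 1)) = fun γ => Real.exp ((γ * c + 1) * Real.log ε) := by
      funext γ; rw [Real.rpow_def_of_pos hε0, mul_comm]
    rw [hrw]
    refine Real.tendsto_exp_atBot.comp ?_
    refine Filter.Tendsto.atTop_mul_const_of_neg hlog ?_
    exact Filter.tendsto_atTop_add_const_right _ 1 (Filter.Tendsto.atBot_mul_const_of_neg hc Filter.tendsto_id)
  have hb := key β hβ
  have ha := key α hα
  have hcont : ∀ p : ℝ, Filter.Tendsto (fun x : ℝ => (x + 1) ^ p) (nhds 0) (nhds 1) := by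
    intro p
    have : ContinuousAt (fun x : ℝ => (x + 1) ^ p) 0 := by
      exact ContinuousAt.rpow_const (continuousAt_id.add continuousAt_const)
        (Or.inl (by norm_num))
    have h0 : ((0:ℝ) + 1) ^ p = 1 := by rw [zero_add, Real.one_rpow]
    simpa [h0] using this.tendsto
  have hnum : Filter.Tendsto (fun γ => (ε ^ (γ * β + 1) + 1) ^ (1/β) * (1 + ε) ^ (1/α))
      Filter.atBot (nhds ((1:ℝ) * (1 + ε) ^ (1/α))) :=
    Filter.Tendsto.mul_const _ ((hcont (1/β)).comp hb)
  have hden : Filter.Tendsto (fun γ => (ε ^ (γ * α + 1) + 1) ^ (1/α) * (1 + ε) ^ (1/β))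
      Filter.atBot (nhds ((1:ℝ) * (1 + ε) ^ (1/β))) :=
    Filter.Tendsto.mul_const _ ((hcont (1/α)).comp ha)
  have hden_ne : (1:ℝ) * (1 + ε) ^ (1/β) ≠ 0 := by
    rw [one_mul]; exact (Real.rpow_pos_of_pos h1ε_pos _).ne'
  have := hnum.div hden hden_ne
  have heq : (1:ℝ) * (1 + ε) ^ (1/α) / ((1:ℝ) * (1 + ε) ^ (1/β)) = (1 + ε) ^ (1/α - 1/β) := by
    rw [one_mul, one_mul, ← Real.rpow_sub h1ε_pos]
  rwa [heq] at this

lemma contAt_gamma (α β ε : ℝ) (hε0 : 0 < ε) (g : ℝ) :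
    ContinuousAt (fun γ => Cfun α β γ ε) g := by
  have hb : ∀ c : ℝ, ContinuousAt (fun γ : ℝ => ε ^ (γ * c + 1)) g := by
    intro c
    exact (Real.continuousAt_const_rpow hε0.ne').comp (by fun_prop)
  have h1 : ∀ c d : ℝ, ContinuousAt (fun γ : ℝ => (ε ^ (γ * c + 1) + 1) ^ d) g := by
    intro c d
    exact ContinuousAt.rpow_const ((hb c).add continuousAt_const)
      (Or.inl (by positivity))
  unfold Cfun
  apply ContinuousAt.div
  · exact (h1 β (1/β)).mul continuousAt_const
  · exact (h1 α (1/α)).mul continuousAt_const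
  · positivity

lemma exists_big_A (α β : ℝ) (hαβ : α < β) (hβ : β < 0) :
    ∀ w < (2:ℝ) ^ (1/α - 1/β),
      ∃ γ, γ < -(1/α) ∧ ∃ ε ∈ Icc (0:ℝ) 1, w < Cfun α β γ ε := by
  intro w hw
  -- step 1: choose ε close to 1
  have hcont : ContinuousAt (fun ε : ℝ => (1 + ε) ^ (1/α - 1/β)) 1 :=
    ContinuousAt.rpow_const (continuousAt_const.add continuousAt_id) (Or.inl (by norm_num))
  have hval : ((1:ℝ) + 1) ^ (1/α - 1/β) = (2:ℝ) ^ (1/α - 1/β) := by norm_num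
  have hne : Filter.NeBot (nhdsWithin (1:ℝ) (Ioo (0:ℝ) 1)) := by
    rw [← mem_closure_iff_nhdsWithin_neBot, closure_Ioo (by norm_num : (0:ℝ) ≠ 1)]
    exact ⟨by norm_num, le_refl 1⟩
  have htend : Filter.Tendsto (fun ε : ℝ => (1 + ε) ^ (1/α - 1/β))
      (nhdsWithin 1 (Ioo (0:ℝ) 1)) (nhds ((2:ℝ) ^ (1/α - 1/β))) := by
    have := hcont.continuousWithinAt (s := Ioo (0:ℝ) 1)
    rwa [ContinuousWithinAt, hval] at this
  have hev : ∀ᶠ ε in nhdsWithin 1 (Ioo (0:ℝ) 1),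
      w < (1 + ε) ^ (1/α - 1/β) := htend.eventually (eventually_gt_nhds hw)
  obtain ⟨ε, hwε, hεm⟩ := (hev.and self_mem_nhdsWithin).exists
  -- step 2: choose γ very negative
  have htend2 := tendsto_gamma_atBot α β ε hαβ hβ hεm.1 hεm.2
  have hev2 : ∀ᶠ γ in Filter.atBot, w < Cfun α β γ ε :=
    htend2.eventually (eventually_gt_nhds hwε)
  obtain ⟨γ, hγw, hγlt⟩ := (hev2.and (Filter.eventually_lt_atBot (-(1/α)))).exists
  exact ⟨γ, hγlt, ε, ⟨hεm.1.le, hεm.2.le⟩, hγw⟩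

lemma exists_big_B (α β : ℝ) (hαβ : α < β) (hβ : β < 0) :
    ∀ w < (2:ℝ) ^ (-(1/α)),
      ∃ γ, γ < -(1/α) ∧ ∃ ε ∈ Icc (0:ℝ) 1, w < Cfun α β γ ε := by
  intro w hw
  have hα : α < 0 := hαβ.trans hβ
  have hα' : α ≠ 0 := ne_of_lt hα
  have ht1 : β / α < 1 := by rw [div_lt_one_of_neg hα]; exact hαβ
  have hc_pos : 0 < 1 - β / α := by linarith
  set L : ℝ → ℝ := fun ε =>
    ((ε ^ (1 - β / α) + 1) ^ (1/β) * (1 + ε) ^ (1/α)) / ((2:ℝ) ^ (1/α) * (1 + ε) ^ (1/β))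
    with hL_def
  -- step 1: L is continuous at 0 with value 2^(-(1/α))
  have hLc : ContinuousAt L 0 := by
    apply ContinuousAt.div
    · apply ContinuousAt.mul
      · exact ContinuousAt.rpow_const
          ((Real.continuousAt_rpow_const 0 _ (Or.inr hc_pos.le)).add continuousAt_const)
          (Or.inl (by
            have : (0:ℝ) ^ (1 - β / α) = 0 := Real.zero_rpow hc_pos.ne'
            rw [this]; norm_num))
      · exact ContinuousAt.rpow_const (continuousAt_const.add continuousAt_id)
          (Or.inl (by norm_num))
    · exact continuousAt_const.mul
        (ContinuousAt.rpow_const (continuousAt_const.add continuousAt_id) (Or.inl (by norm_num)))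
    · have : (0:ℝ) < (2:ℝ) ^ (1/α) * (1 + (0:ℝ)) ^ (1/β) := by positivity
      exact this.ne'
  have hL0 : L 0 = (2:ℝ) ^ (-(1/α)) := by
    rw [hL_def]
    simp only [Real.zero_rpow hc_pos.ne', zero_add, add_zero, Real.one_rpow]
    rw [Real.rpow_neg (by norm_num : (0:ℝ) ≤ 2)]
    simp
  have hne : Filter.NeBot (nhdsWithin (0:ℝ) (Ioo (0:ℝ) 1)) := by
    rw [← mem_closure_iff_nhdsWithin_neBot, closure_Ioo (by norm_num : (0:ℝ) ≠ 1)]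
    exact ⟨le_refl 0, by norm_num⟩
  have htend : Filter.Tendsto L (nhdsWithin 0 (Ioo (0:ℝ) 1)) (nhds ((2:ℝ) ^ (-(1/α)))) := by
    have := hLc.continuousWithinAt (s := Ioo (0:ℝ) 1)
    rwa [ContinuousWithinAt, hL0] at this
  obtain ⟨ε, hwε, hεm⟩ :=
    ((htend.eventually (eventually_gt_nhds hw)).and self_mem_nhdsWithin).exists
  -- step 2: Cfun at γ₀ = -(1/α) equals L ε
  have hεpos := hεm.1
  have hCval : Cfun α β (-(1/α)) ε = L ε := by
    unfold Cfun
    rw [hL_def]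
    have e0 : -(1/α) * α + 1 = 0 := by field_simp; norm_num
    have e1 : -(1/α) * β + 1 = 1 - β / α := by field_simp; ring
    rw [e0, e1, Real.rpow_zero]
    norm_num
  have hcont := contAt_gamma α β ε hεpos (-(1/α))
  have htend2 : Filter.Tendsto (fun γ => Cfun α β γ ε)
      (nhdsWithin (-(1/α)) (Iio (-(1/α)))) (nhds (L ε)) := by
    have := hcont.continuousWithinAt (s := Iio (-(1/α)))
    rwa [ContinuousWithinAt, hCval] at this
  have hne2 : Filter.NeBot (nhdsWithin (-(1/α)) (Iio (-(1/α)))) := nhdsLT_neBot _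
  obtain ⟨γ, hγw, hγm⟩ :=
    ((htend2.eventually (eventually_gt_nhds hwε)).and self_mem_nhdsWithin).exists
  exact ⟨γ, hγm, ε, ⟨hεm.1.le, hεm.2.le⟩, hγw⟩


lemma Cfun_zero (α β γ : ℝ) (hαβ : α < β) (hβ : β < 0) (hγ : γ < -(1/α)) :
    Cfun α β γ 0 = 1 := by
  have hα : α < 0 := hαβ.trans hβ
  have hα' : α ≠ 0 := ne_of_lt hα
  have hβ' : β ≠ 0 := ne_of_lt hβ
  have ha_pos : 0 < γ * α + 1 := by
    have h1 : γ * α > (-(1/α)) * α := mul_lt_mul_of_neg_right hγ hα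
    have h2 : (-(1/α)) * α = -1 := by field_simp
    rw [h2] at h1; linarith
  have hγβ : γ < -(1/β) := by
    have : 1/β < 1/α := one_div_lt_one_div_of_neg_of_lt hβ hαβ
    linarith
  have hb_pos : 0 < γ * β + 1 := by
    have h1 : γ * β > (-(1/β)) * β := mul_lt_mul_of_neg_right hγβ hβ
    have h2 : (-(1/β)) * β = -1 := by field_simp
    rw [h2] at h1; linarith
  unfold Cfun
  rw [Real.zero_rpow ha_pos.ne', Real.zero_rpow hb_pos.ne']
  norm_num

/-- For `α < β < 0`, the constant `C_{α,β} = sup_{γ ∈ (-∞,-1/α)} C_{α,β,γ}` equals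
`2^{1/α-1/β}` when `α ≤ 2β`, and `2^{-1/α}` when `2β < α < β`. -/
theorem Cab_case_neg_neg
    (α β : ℝ) (hαβ : α < β) (hβ : β < 0) :
    (α ≤ 2 * β →
      sSup {c | ∃ γ : ℝ, γ < -(1 / α) ∧ c = Cmax α β γ} = (2 : ℝ) ^ (1 / α - 1 / β)) ∧
    (2 * β < α →
      sSup {c | ∃ γ : ℝ, γ < -(1 / α) ∧ c = Cmax α β γ} = (2 : ℝ) ^ (-(1 / α))) := by
  have hα : α < 0 := hαβ.trans hβ
  have hα' : α ≠ 0 := ne_of_lt hα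
  have hβ' : β ≠ 0 := ne_of_lt hβ
  have hαβpos : 0 < α * β := mul_pos_of_neg_of_neg hα hβ
  set A : ℝ := (2:ℝ) ^ (1/α - 1/β) with hA_def
  set B : ℝ := (2:ℝ) ^ (-(1/α)) with hB_def
  set M : ℝ := max A B with hM_def
  set S : Set ℝ := {c | ∃ γ : ℝ, γ < -(1 / α) ∧ c = Cmax α β γ} with hS_def
  have hsr : 1/β < 1/α := one_div_lt_one_div_of_neg_of_lt hβ hαβ
  have h1A : (1:ℝ) ≤ A := Real.one_le_rpow one_le_two (by linarith)
  -- pointwise bound on Icc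
  have hptIcc : ∀ γ, γ < -(1/α) → ∀ ε ∈ Icc (0:ℝ) 1, Cfun α β γ ε ≤ M := by
    intro γ hγ ε hε
    rcases eq_or_lt_of_le hε.1 with h0 | h0
    · rw [← h0, Cfun_zero α β γ hαβ hβ hγ]
      exact le_max_of_le_left h1A
    · exact ptwise α β γ ε hαβ hβ hγ h0 hε.2
  have himg_ne : ∀ γ : ℝ, (Cfun α β γ '' Icc (0:ℝ) 1).Nonempty :=
    fun γ => ⟨Cfun α β γ 0, mem_image_of_mem _ ⟨le_refl 0, zero_le_one⟩⟩
  have hbdd : ∀ γ, γ < -(1/α) → BddAbove (Cfun α β γ '' Icc (0:ℝ) 1) := by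
    intro γ hγ
    exact ⟨M, by rintro x ⟨ε, hε, rfl⟩; exact hptIcc γ hγ ε hε⟩
  have hCmax_le : ∀ γ, γ < -(1/α) → Cmax α β γ ≤ M := by
    intro γ hγ
    exact csSup_le (himg_ne γ) (by rintro x ⟨ε, hε, rfl⟩; exact hptIcc γ hγ ε hε)
  have hC_ge : ∀ γ, γ < -(1/α) → ∀ ε ∈ Icc (0:ℝ) 1, Cfun α β γ ε ≤ Cmax α β γ := by
    intro γ hγ ε hε
    exact le_csSup (hbdd γ hγ) (mem_image_of_mem _ hε)
  have hγ0 : (0:ℝ) < -(1/α) := by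
    have : 1/α < 0 := one_div_neg.mpr hα
    linarith
  have hSne : S.Nonempty := ⟨Cmax α β 0, 0, hγ0, rfl⟩
  have hSbdd : BddAbove S := ⟨M, by rintro c ⟨γ, hγ, rfl⟩; exact hCmax_le γ hγ⟩
  have hSub : sSup S ≤ M := csSup_le hSne (by rintro c ⟨γ, hγ, rfl⟩; exact hCmax_le γ hγ)
  have hMle : M ≤ sSup S := by
    rw [le_csSup_iff hSbdd hSne]
    intro bnd hbnd
    by_contra hlt
    push_neg at hlt
    have hget : ∃ γ, γ < -(1/α) ∧ ∃ ε ∈ Icc (0:ℝ) 1, bnd < Cfun α β γ ε := by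
      rcases lt_max_iff.mp hlt with h | h
      · exact exists_big_A α β hαβ hβ bnd h
      · exact exists_big_B α β hαβ hβ bnd h
    obtain ⟨γ, hγ, ε, hε, hbc⟩ := hget
    have h1 : Cfun α β γ ε ≤ Cmax α β γ := hC_ge γ hγ ε hε
    have h2 : Cmax α β γ ≤ bnd := hbnd ⟨γ, hγ, rfl⟩
    linarith
  have hsSup : sSup S = M := le_antisymm hSub hMle
  constructor
  · intro hcase
    have hBA : B ≤ A := by
      have key : 2/α - 1/β = (2*β - α)/(α*β) := by field_simp <;> ring
      have h2 : (0:ℝ) ≤ (2*β - α)/(α*β) := div_nonneg (by linarith) hαβpos.le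
      have h3 : -(1/α) ≤ 1/α - 1/β := by
        have h2' : (0:ℝ) ≤ 2/α - 1/β := by rw [key]; exact h2
        have h2α : 2/α = 1/α + 1/α := by ring
        linarith
      exact Real.rpow_le_rpow_of_exponent_le one_le_two h3
    rw [hsSup, hM_def, max_eq_left hBA]
  · intro hcase
    have hAB : A ≤ B := by
      have key : 1/β - 2/α = (α - 2*β)/(α*β) := by field_simp <;> ring
      have h2 : (0:ℝ) ≤ (α - 2*β)/(α*β) := div_nonneg (by linarith) hαβpos.le
      have h3 : 1/α - 1/β ≤ -(1/α) := by
        have h2' : (0:ℝ) ≤ 1/β - 2/α := by rw [key]; exact h2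
        have h2α : 2/α = 1/α + 1/α := by ring
        linarith
      exact Real.rpow_le_rpow_of_exponent_le one_le_two h3
    rw [hsSup, hM_def, max_eq_right hAB]
end

section
/- Let α < 0 < β and define C_{α,β} = sup over γ ∈ (−1/β, −1/α) of C_{α,β,γ}. Then C_{α,β} = 2^{1/β} if 0 < β ≤ −α, and C_{α,β} = 2^{−1/α} if β > −α; equivalently, C_{α,β} = 2^{1/min{|α|, β}}. -/
open Set Filter Topology

lemma cfun_le (α β γ ε : ℝ) (hα : α < 0) (hβ : 0 < β)
    (hγ1 : -(1 / β) < γ) (hγ2 : γ < -(1 / α)) (hε : ε ∈ Icc (0:ℝ) 1) :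
    Cfun α β γ ε ≤ max ((2:ℝ) ^ (1 / β)) ((2:ℝ) ^ (-(1 / α))) := by
  obtain ⟨hε0, hε1⟩ := hε
  have hβ' : (0:ℝ) < 1 / β := by positivity
  have hα' : 1 / α < 0 := one_div_neg.mpr hα
  have ha : 0 < γ * β + 1 := by
    have h := mul_lt_mul_of_pos_right hγ1 hβ
    rw [neg_mul, one_div, inv_mul_cancel₀ hβ.ne'] at h
    linarith
  have hb : 0 < γ * α + 1 := by
    have h := mul_lt_mul_of_neg_right hγ2 hα
    rw [neg_mul, one_div, inv_mul_cancel₀ hα.ne] at h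
    linarith
  rcases hε0.eq_or_lt with h0 | h0
  · subst h0
    have : Cfun α β γ 0 = 1 := by
      simp [Cfun, Real.zero_rpow ha.ne', Real.zero_rpow hb.ne']
    rw [this]
    refine le_trans ?_ (le_max_left _ _)
    have h2 := Real.rpow_le_rpow_of_exponent_le (by norm_num : (1:ℝ) ≤ 2) hβ'.le
    rwa [Real.rpow_zero] at h2
  unfold Cfun
  have hApos : (0:ℝ) < ε ^ (γ * β + 1) + 1 := by positivity
  have hBpos : (0:ℝ) < ε ^ (γ * α + 1) + 1 := by positivity
  have h1ε : (0:ℝ) < 1 + ε := by linarith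
  have hBα : (0:ℝ) < (ε ^ (γ * α + 1) + 1) ^ (1 / α) := Real.rpow_pos_of_pos hBpos _
  have h1εβ : (0:ℝ) < (1 + ε) ^ (1 / β) := Real.rpow_pos_of_pos h1ε _
  have h1εα : (0:ℝ) < (1 + ε) ^ (1 / α) := Real.rpow_pos_of_pos h1ε _
  rcases le_or_gt γ 0 with hg | hg
  · -- γ ≤ 0 : bound by 2^(1/β)
    refine le_trans ?_ (le_max_left _ _)
    have hεa : ε ^ (γ * β + 1) ≤ 1 := Real.rpow_le_one h0.le hε1 ha.le
    have hf1 : (ε ^ (γ * β + 1) + 1) ^ (1 / β) ≤ (2:ℝ) ^ (1 / β) :=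
      Real.rpow_le_rpow hApos.le (by linarith) hβ'.le
    have hb1 : (1:ℝ) ≤ γ * α + 1 := by nlinarith
    have hεb : ε ^ (γ * α + 1) ≤ ε := by
      have := Real.rpow_le_rpow_of_exponent_ge h0 hε1 hb1
      rwa [Real.rpow_one] at this
    have hg1 : (1 + ε) ^ (1 / α) ≤ (ε ^ (γ * α + 1) + 1) ^ (1 / α) :=
      Real.rpow_le_rpow_of_nonpos hBpos (by linarith) hα'.le
    have hg2 : (1:ℝ) ≤ (1 + ε) ^ (1 / β) := by
      have := Real.rpow_le_rpow zero_le_one (by linarith : (1:ℝ) ≤ 1 + ε) hβ'.le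
      rwa [Real.one_rpow] at this
    calc ((ε ^ (γ * β + 1) + 1) ^ (1 / β) * (1 + ε) ^ (1 / α)) /
          ((ε ^ (γ * α + 1) + 1) ^ (1 / α) * (1 + ε) ^ (1 / β))
        ≤ ((2:ℝ) ^ (1 / β) * (ε ^ (γ * α + 1) + 1) ^ (1 / α)) /
          ((ε ^ (γ * α + 1) + 1) ^ (1 / α) * 1) := by
          apply div_le_div₀ (by positivity)
            (mul_le_mul hf1 hg1 h1εα.le (by positivity)) (by positivity)
          exact mul_le_mul_of_nonneg_left hg2 hBα.le
      _ = (2:ℝ) ^ (1 / β) := by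
          rw [mul_one, mul_div_assoc, div_self hBα.ne', mul_one]
  · -- 0 < γ : bound by 2^(-(1/α))
    refine le_trans ?_ (le_max_right _ _)
    have ha1 : (1:ℝ) ≤ γ * β + 1 := by nlinarith
    have hεa : ε ^ (γ * β + 1) ≤ ε := by
      have := Real.rpow_le_rpow_of_exponent_ge h0 hε1 ha1
      rwa [Real.rpow_one] at this
    have hf1 : (ε ^ (γ * β + 1) + 1) ^ (1 / β) ≤ (1 + ε) ^ (1 / β) :=
      Real.rpow_le_rpow hApos.le (by linarith) hβ'.le
    have hεb : ε ^ (γ * α + 1) ≤ 1 := Real.rpow_le_one h0.le hε1 hb.le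
    have hkey : (1 + ε) ^ (1 / α) ≤
        (ε ^ (γ * α + 1) + 1) ^ (1 / α) * (2:ℝ) ^ (-(1 / α)) := by
      have h1 : (ε ^ (γ * α + 1) + 1) / 2 ≤ 1 + ε := by linarith
      have h3 : (1 + ε) ^ (1 / α) ≤ ((ε ^ (γ * α + 1) + 1) / 2) ^ (1 / α) :=
        Real.rpow_le_rpow_of_nonpos (by positivity) h1 hα'.le
      rw [Real.div_rpow hBpos.le (by norm_num)] at h3
      rw [Real.rpow_neg (by norm_num : (0:ℝ) ≤ 2), ← div_eq_mul_inv]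
      exact h3
    calc ((ε ^ (γ * β + 1) + 1) ^ (1 / β) * (1 + ε) ^ (1 / α)) /
          ((ε ^ (γ * α + 1) + 1) ^ (1 / α) * (1 + ε) ^ (1 / β))
        ≤ ((1 + ε) ^ (1 / β) * ((ε ^ (γ * α + 1) + 1) ^ (1 / α) * (2:ℝ) ^ (-(1 / α)))) /
          ((ε ^ (γ * α + 1) + 1) ^ (1 / α) * (1 + ε) ^ (1 / β)) := by
          exact (div_le_div_iff_of_pos_right (by positivity)).mpr
            (mul_le_mul hf1 hkey h1εα.le h1εβ.le)
      _ = (2:ℝ) ^ (-(1 / α)) := by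
          field_simp

lemma exists_near_beta (α β : ℝ) (hα : α < 0) (hβ : 0 < β) {δ : ℝ} (hδ : 0 < δ) :
    ∃ γ ε : ℝ, -(1 / β) < γ ∧ γ < -(1 / α) ∧ ε ∈ Icc (0:ℝ) 1 ∧
      (2:ℝ) ^ (1 / β) - δ < Cfun α β γ ε := by
  have hαβ : -(1 / β) < -(1 / α) := by
    have h1 : (0:ℝ) < 1 / β := by positivity
    have h2 : 1 / α < 0 := one_div_neg.mpr hα
    linarith
  set b₀ : ℝ := -(1 / β) * α + 1 with hb₀def
  have hb₀ : 0 < b₀ := by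
    have h1 : (0:ℝ) < 1 / β := by positivity
    have h2 : (0:ℝ) < -α := by linarith
    rw [hb₀def]
    nlinarith [mul_pos h1 h2]
  set F : ℝ → ℝ := fun ε => (2:ℝ) ^ (1 / β) * (1 + ε) ^ (1 / α) /
      ((ε ^ b₀ + 1) ^ (1 / α) * (1 + ε) ^ (1 / β)) with hFdef
  have hFeq : ∀ x : ℝ, Cfun α β (-(1 / β)) x = F x := by
    intro x
    have h1 : -(1 / β) * β + 1 = 0 := by field_simp; norm_num
    simp only [Cfun, hFdef, h1, Real.rpow_zero, hb₀def]
    norm_num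
  have hF0 : F 0 = (2:ℝ) ^ (1 / β) := by
    simp [hFdef, Real.zero_rpow hb₀.ne', Real.one_rpow]
  have cF : ContinuousAt F 0 := by
    have c1 : ContinuousAt (fun ε : ℝ => (1 + ε) ^ (1 / α)) 0 :=
      (continuousAt_const.add continuousAt_id).rpow_const (Or.inl (by norm_num))
    have c2 : ContinuousAt (fun ε : ℝ => (ε ^ b₀ + 1) ^ (1 / α)) 0 := by
      have h := Real.continuousAt_rpow_const 0 b₀ (Or.inr hb₀.le)
      exact (h.add continuousAt_const).rpow_const
        (Or.inl (by simp [Real.zero_rpow hb₀.ne']))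
    have c3 : ContinuousAt (fun ε : ℝ => (1 + ε) ^ (1 / β)) 0 :=
      (continuousAt_const.add continuousAt_id).rpow_const (Or.inl (by norm_num))
    exact (continuousAt_const.mul c1).div (c2.mul c3)
      (by simp [Real.zero_rpow hb₀.ne', Real.one_rpow])
  -- Step 2 : pick ε ∈ (0,1) with F ε close to 2^(1/β)
  have h1 : ∀ᶠ x in 𝓝[>] (0:ℝ), dist (F x) (F 0) < δ / 2 :=
    (cF.tendsto.mono_left nhdsWithin_le_nhds).eventually
      (Metric.ball_mem_nhds _ (by linarith))
  have h2 : ∀ᶠ x in 𝓝[>] (0:ℝ), x ∈ Ioo (0:ℝ) 1 :=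
    Ioo_mem_nhdsGT_of_mem (by constructor <;> norm_num)
  obtain ⟨ε, hdist, hεIoo⟩ := (h1.and h2).exists
  have hε0 : 0 < ε := hεIoo.1
  have hε1 : ε < 1 := hεIoo.2
  -- Step 3 : continuity in γ at -(1/β)
  have hden : ((ε ^ (-(1 / β) * α + 1) + 1) ^ (1 / α) * (1 + ε) ^ (1 / β)) ≠ 0 := by
    have := Real.rpow_pos_of_pos (show (0:ℝ) < ε ^ (-(1 / β) * α + 1) + 1 by positivity) (1 / α)
    have := Real.rpow_pos_of_pos (show (0:ℝ) < 1 + ε by linarith) (1 / β)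
    positivity
  have cG : ContinuousAt (fun γ : ℝ => Cfun α β γ ε) (-(1 / β)) := by
    have k1 : ContinuousAt (fun γ : ℝ => ε ^ (γ * β + 1)) (-(1 / β)) :=
      (Real.continuousAt_const_rpow hε0.ne').comp
        ((continuousAt_id.mul continuousAt_const).add continuousAt_const)
    have k2 : ContinuousAt (fun γ : ℝ => ε ^ (γ * α + 1)) (-(1 / β)) :=
      (Real.continuousAt_const_rpow hε0.ne').comp
        ((continuousAt_id.mul continuousAt_const).add continuousAt_const)
    have k1' : ContinuousAt (fun γ : ℝ => (ε ^ (γ * β + 1) + 1) ^ (1 / β)) (-(1 / β)) := by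
      refine (k1.add continuousAt_const).rpow_const (Or.inl ?_)
      have : (0:ℝ) < ε ^ (-(1 / β) * β + 1) + 1 := by positivity
      exact this.ne'
    have k2' : ContinuousAt (fun γ : ℝ => (ε ^ (γ * α + 1) + 1) ^ (1 / α)) (-(1 / β)) := by
      refine (k2.add continuousAt_const).rpow_const (Or.inl ?_)
      have : (0:ℝ) < ε ^ (-(1 / β) * α + 1) + 1 := by positivity
      exact this.ne'
    exact (k1'.mul continuousAt_const).div (k2'.mul continuousAt_const) hden
  have hGval : Cfun α β (-(1 / β)) ε = F ε := hFeq ε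
  have h3 : ∀ᶠ γ in 𝓝[>] (-(1 / β)), dist (Cfun α β γ ε) (F ε) < δ / 2 := by
    have := (cG.tendsto.mono_left
        (nhdsWithin_le_nhds : 𝓝[>] (-(1 / β)) ≤ 𝓝 (-(1 / β)))).eventually
      (Metric.ball_mem_nhds (Cfun α β (-(1 / β)) ε) (by linarith : (0:ℝ) < δ / 2))
    rw [hGval] at this
    exact this
  have h4 : ∀ᶠ γ in 𝓝[>] (-(1 / β)), γ ∈ Ioo (-(1 / β)) (-(1 / α)) :=
    Ioo_mem_nhdsGT_of_mem ⟨le_refl _, hαβ⟩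
  obtain ⟨γ, hgd, hγIoo⟩ := (h3.and h4).exists
  refine ⟨γ, ε, hγIoo.1, hγIoo.2, ⟨hε0.le, hε1.le⟩, ?_⟩
  rw [hF0] at hdist
  rw [Real.dist_eq, abs_lt] at hdist hgd
  linarith

lemma exists_near_alpha (α β : ℝ) (hα : α < 0) (hβ : 0 < β) {δ : ℝ} (hδ : 0 < δ) :
    ∃ γ ε : ℝ, -(1 / β) < γ ∧ γ < -(1 / α) ∧ ε ∈ Icc (0:ℝ) 1 ∧
      (2:ℝ) ^ (-(1 / α)) - δ < Cfun α β γ ε := by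
  have hαβ : -(1 / β) < -(1 / α) := by
    have h1 : (0:ℝ) < 1 / β := by positivity
    have h2 : 1 / α < 0 := one_div_neg.mpr hα
    linarith
  set a₀ : ℝ := -(1 / α) * β + 1 with ha₀def
  have ha₀ : 0 < a₀ := by
    have h2 : 1 / α < 0 := one_div_neg.mpr hα
    have : 0 < -(1 / α) * β := by nlinarith
    rw [ha₀def]
    nlinarith
  set F : ℝ → ℝ := fun ε => (ε ^ a₀ + 1) ^ (1 / β) * (1 + ε) ^ (1 / α) /
      ((2:ℝ) ^ (1 / α) * (1 + ε) ^ (1 / β)) with hFdef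
  have hFeq : ∀ x : ℝ, Cfun α β (-(1 / α)) x = F x := by
    intro x
    have hα0 : α ≠ 0 := hα.ne
    have h1 : -(1 / α) * α + 1 = 0 := by field_simp; norm_num
    simp only [Cfun, hFdef, h1, Real.rpow_zero, ha₀def]
    norm_num
  have hF0 : F 0 = (2:ℝ) ^ (-(1 / α)) := by
    simp [hFdef, Real.zero_rpow ha₀.ne', Real.one_rpow,
      Real.rpow_neg (by norm_num : (0:ℝ) ≤ 2)]
  have cF : ContinuousAt F 0 := by
    have c1 : ContinuousAt (fun ε : ℝ => (1 + ε) ^ (1 / α)) 0 :=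
      (continuousAt_const.add continuousAt_id).rpow_const (Or.inl (by norm_num))
    have c2 : ContinuousAt (fun ε : ℝ => (ε ^ a₀ + 1) ^ (1 / β)) 0 := by
      have h := Real.continuousAt_rpow_const 0 a₀ (Or.inr ha₀.le)
      exact (h.add continuousAt_const).rpow_const
        (Or.inl (by simp [Real.zero_rpow ha₀.ne']))
    have c3 : ContinuousAt (fun ε : ℝ => (1 + ε) ^ (1 / β)) 0 :=
      (continuousAt_const.add continuousAt_id).rpow_const (Or.inl (by norm_num))
    refine (c2.mul c1).div (continuousAt_const.mul c3) ?_
    have := Real.rpow_pos_of_pos (show (0:ℝ) < 2 by norm_num) (1 / α)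
    simp only [add_zero, Real.one_rpow]
    positivity
  have h1 : ∀ᶠ x in 𝓝[>] (0:ℝ), dist (F x) (F 0) < δ / 2 :=
    (cF.tendsto.mono_left nhdsWithin_le_nhds).eventually
      (Metric.ball_mem_nhds _ (by linarith))
  have h2 : ∀ᶠ x in 𝓝[>] (0:ℝ), x ∈ Ioo (0:ℝ) 1 :=
    Ioo_mem_nhdsGT_of_mem (by constructor <;> norm_num)
  obtain ⟨ε, hdist, hεIoo⟩ := (h1.and h2).exists
  have hε0 : 0 < ε := hεIoo.1
  have hε1 : ε < 1 := hεIoo.2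
  have hden : ((ε ^ (-(1 / α) * α + 1) + 1) ^ (1 / α) * (1 + ε) ^ (1 / β)) ≠ 0 := by
    have := Real.rpow_pos_of_pos (show (0:ℝ) < ε ^ (-(1 / α) * α + 1) + 1 by positivity) (1 / α)
    have := Real.rpow_pos_of_pos (show (0:ℝ) < 1 + ε by linarith) (1 / β)
    positivity
  have cG : ContinuousAt (fun γ : ℝ => Cfun α β γ ε) (-(1 / α)) := by
    have k1 : ContinuousAt (fun γ : ℝ => ε ^ (γ * β + 1)) (-(1 / α)) :=
      (Real.continuousAt_const_rpow hε0.ne').comp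
        ((continuousAt_id.mul continuousAt_const).add continuousAt_const)
    have k2 : ContinuousAt (fun γ : ℝ => ε ^ (γ * α + 1)) (-(1 / α)) :=
      (Real.continuousAt_const_rpow hε0.ne').comp
        ((continuousAt_id.mul continuousAt_const).add continuousAt_const)
    have k1' : ContinuousAt (fun γ : ℝ => (ε ^ (γ * β + 1) + 1) ^ (1 / β)) (-(1 / α)) := by
      refine (k1.add continuousAt_const).rpow_const (Or.inl ?_)
      have : (0:ℝ) < ε ^ (-(1 / α) * β + 1) + 1 := by positivity
      exact this.ne'
    have k2' : ContinuousAt (fun γ : ℝ => (ε ^ (γ * α + 1) + 1) ^ (1 / α)) (-(1 / α)) := by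
      refine (k2.add continuousAt_const).rpow_const (Or.inl ?_)
      have : (0:ℝ) < ε ^ (-(1 / α) * α + 1) + 1 := by positivity
      exact this.ne'
    exact (k1'.mul continuousAt_const).div (k2'.mul continuousAt_const) hden
  have hGval : Cfun α β (-(1 / α)) ε = F ε := hFeq ε
  have h3 : ∀ᶠ γ in 𝓝[<] (-(1 / α)), dist (Cfun α β γ ε) (F ε) < δ / 2 := by
    have := (cG.tendsto.mono_left
        (nhdsWithin_le_nhds : 𝓝[<] (-(1 / α)) ≤ 𝓝 (-(1 / α)))).eventually
      (Metric.ball_mem_nhds (Cfun α β (-(1 / α)) ε) (by linarith : (0:ℝ) < δ / 2))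
    rw [hGval] at this
    exact this
  have h4 : ∀ᶠ γ in 𝓝[<] (-(1 / α)), γ ∈ Ioo (-(1 / β)) (-(1 / α)) :=
    Ioo_mem_nhdsLT_of_mem ⟨hαβ, le_refl _⟩
  obtain ⟨γ, hgd, hγIoo⟩ := (h3.and h4).exists
  refine ⟨γ, ε, hγIoo.1, hγIoo.2, ⟨hε0.le, hε1.le⟩, ?_⟩
  rw [hF0] at hdist
  rw [Real.dist_eq, abs_lt] at hdist hgd
  linarith

lemma cmax_bddAbove (α β γ : ℝ) (hα : α < 0) (hβ : 0 < β)
    (hγ1 : -(1 / β) < γ) (hγ2 : γ < -(1 / α)) :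
    ∀ x ∈ Cfun α β γ '' Icc (0:ℝ) 1,
      x ≤ max ((2:ℝ) ^ (1 / β)) ((2:ℝ) ^ (-(1 / α))) := by
  rintro x ⟨ε, hε, rfl⟩
  exact cfun_le α β γ ε hα hβ hγ1 hγ2 hε

/-- For `α < 0 < β`, the constant `C_{α,β} = sup_{γ ∈ (-1/β,-1/α)} C_{α,β,γ}` equals
`2^{1/β}` when `0 < β ≤ -α`, and `2^{-1/α}` when `β > -α`; equivalently it equals
`2^{1/min{|α|,β}}`. -/
theorem Cab_case_neg_pos
    (α β : ℝ) (hα : α < 0) (hβ : 0 < β) :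
    (β ≤ -α →
      sSup {c | ∃ γ : ℝ, -(1 / β) < γ ∧ γ < -(1 / α) ∧ c = Cmax α β γ} =
        (2 : ℝ) ^ (1 / β)) ∧
    (-α < β →
      sSup {c | ∃ γ : ℝ, -(1 / β) < γ ∧ γ < -(1 / α) ∧ c = Cmax α β γ} =
        (2 : ℝ) ^ (-(1 / α))) ∧
    sSup {c | ∃ γ : ℝ, -(1 / β) < γ ∧ γ < -(1 / α) ∧ c = Cmax α β γ} =
      (2 : ℝ) ^ (min |α| β)⁻¹ := by
  set M : ℝ := max ((2:ℝ) ^ (1 / β)) ((2:ℝ) ^ (-(1 / α))) with hMdef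
  have hM0 : (0:ℝ) ≤ M :=
    le_trans (Real.rpow_pos_of_pos (by norm_num) (1 / β)).le (le_max_left _ _)
  set S : Set ℝ := {c | ∃ γ : ℝ, -(1 / β) < γ ∧ γ < -(1 / α) ∧ c = Cmax α β γ} with hSdef
  have hSub : ∀ c ∈ S, c ≤ M := by
    rintro c ⟨γ, h1, h2, rfl⟩
    exact Real.sSup_le (cmax_bddAbove α β γ hα hβ h1 h2) hM0
  have hbdd : BddAbove S := ⟨M, fun c hc => hSub c hc⟩
  have hge : ∀ L : ℝ,
      (∀ δ : ℝ, 0 < δ → ∃ γ ε : ℝ, -(1 / β) < γ ∧ γ < -(1 / α) ∧ ε ∈ Icc (0:ℝ) 1 ∧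
        L - δ < Cfun α β γ ε) → L ≤ sSup S := by
    intro L hL
    refine le_of_forall_pos_le_add fun δ hδ => ?_
    obtain ⟨γ, ε, h1, h2, h3, h4⟩ := hL δ hδ
    have hCm : Cfun α β γ ε ≤ Cmax α β γ := by
      have hb' : BddAbove (Cfun α β γ '' Icc (0:ℝ) 1) :=
        ⟨M, by rintro x ⟨ε', hε', rfl⟩; exact cfun_le α β γ ε' hα hβ h1 h2 hε'⟩
      exact le_csSup hb' ⟨ε, h3, rfl⟩
    have hmem : Cmax α β γ ∈ S := ⟨γ, h1, h2, rfl⟩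
    have := le_csSup hbdd hmem
    linarith
  have hub : sSup S ≤ M := Real.sSup_le hSub hM0
  have hβle : (2:ℝ) ^ (1 / β) ≤ sSup S :=
    hge _ fun δ hδ => exists_near_beta α β hα hβ hδ
  have hαle : (2:ℝ) ^ (-(1 / α)) ≤ sSup S :=
    hge _ fun δ hδ => exists_near_alpha α β hα hβ hδ
  have heq : sSup S = M := le_antisymm hub (max_le hβle hαle)
  have habs : |α| = -α := abs_of_neg hα
  have case1 : β ≤ -α → sSup S = (2:ℝ) ^ (1 / β) := by
    intro h
    have hexp : -(1 / α) ≤ 1 / β := by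
      have h1 : (0:ℝ) < -α := by linarith
      have e : -(1 / α) = 1 / (-α) := by rw [one_div, one_div, inv_neg]
      rw [e, div_le_div_iff₀ h1 hβ]
      linarith
    rw [heq, hMdef, max_eq_left (Real.rpow_le_rpow_of_exponent_le (by norm_num) hexp)]
  have case2 : -α ≤ β → sSup S = (2:ℝ) ^ (-(1 / α)) := by
    intro h
    have hexp : 1 / β ≤ -(1 / α) := by
      have h1 : (0:ℝ) < -α := by linarith
      have e : -(1 / α) = 1 / (-α) := by rw [one_div, one_div, inv_neg]
      rw [e, div_le_div_iff₀ hβ h1]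
      linarith
    rw [heq, hMdef, max_eq_right (Real.rpow_le_rpow_of_exponent_le (by norm_num) hexp)]
  refine ⟨case1, fun h => case2 h.le, ?_⟩
  rcases le_total β (-α) with h | h
  · rw [case1 h, habs, min_eq_right (by linarith), one_div]
  · rw [case2 h, habs, min_eq_left (by linarith), inv_neg, one_div]
end
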